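/- In the D_{n+1}^{(2)} perfect crystal B of level l, the extremal elements defined by b_0 = (0,...,0) and b_a = f_{i_a}^{φ_{i_a}(b_{a-1})} b_{a-1}, with i_a = a-1 for 1 ≤ a ≤ n+1 and i_a = 2n+1-a for n+2 ≤ a ≤ 2n, satisfy: b_a has l in coordinate x_a and zeros elsewhere (1 ≤ a ≤ n), and b_{n+a} has l in coordinate \bar{x}_{n-a+1} and zeros elsewhere (1 ≤ a ≤ n); moreover b_0 = f_0^l b_{2n} with ⟨lΛ_0, h_0⟩ = l. -/

import Mathlib

/- The perfect crystal B of level l for D_{n+1}^{(2)}: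
   elements (x_1,…,x_n,x_0,x̄_n,…,x̄_1) with x_0 ∈ {0,1}, x_i, x̄_i ≥ 0,
   Σ(x_i + x̄_i) ≤ l. -/
structure D2Elt where
  x : ℕ → ℤ
  x0 : ℤ
  xb : ℕ → ℤ

namespace D2Elt

def sumD (n : ℕ) (b : D2Elt) : ℤ := ∑ i ∈ Finset.Icc 1 n, (b.x i + b.xb i)

/-- membership in the level `l` perfect crystal `B` for `D_{n+1}^{(2)}` -/
def mem (n l : ℕ) (b : D2Elt) : Prop :=
  (b.x0 = 0 ∨ b.x0 = 1) ∧ (∀ i, 0 ≤ b.x i) ∧ (∀ i, 0 ≤ b.xb i) ∧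
  (∀ i, i = 0 ∨ n < i → b.x i = 0 ∧ b.xb i = 0) ∧
  sumD n b ≤ l

/-- the Kashiwara operator `f_0` -/
def f0 (b : D2Elt) : D2Elt :=
  if b.xb 1 ≤ b.x 1 then ⟨Function.update b.x 1 (b.x 1 + 1), b.x0, b.xb⟩
  else ⟨b.x, b.x0, Function.update b.xb 1 (b.xb 1 - 1)⟩

/-- the Kashiwara operator `f_i`, `1 ≤ i ≤ n-1` -/
def fmid (i : ℕ) (b : D2Elt) : D2Elt :=
  if b.xb (i+1) ≤ b.x (i+1) then
    ⟨Function.update (Function.update b.x i (b.x i - 1)) (i+1) (b.x (i+1) + 1), b.x0, b.xb⟩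
  else
    ⟨b.x, b.x0, Function.update (Function.update b.xb (i+1) (b.xb (i+1) - 1)) i (b.xb i + 1)⟩

/-- the Kashiwara operator `f_n` -/
def flast (n : ℕ) (b : D2Elt) : D2Elt :=
  if b.x0 = 0 then ⟨Function.update b.x n (b.x n - 1), 1, b.xb⟩
  else ⟨b.x, 0, Function.update b.xb n (b.xb n + 1)⟩

/-- the Kashiwara operator `f_i`, `0 ≤ i ≤ n` -/
def f (n i : ℕ) (b : D2Elt) : D2Elt :=
  if i = 0 then f0 b else if i = n then flast n b else fmid i b

/-- `φ_i(b)`; `f_i b` is defined exactly when `φ_i(b) > 0` -/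
def phi (n l i : ℕ) (b : D2Elt) : ℤ :=
  if i = 0 then (l : ℤ) - b.x0 - sumD n b + 2 * max (b.xb 1 - b.x 1) 0
  else if i = n then 2 * b.x n + b.x0
  else b.x i + max (b.xb (i+1) - b.x (i+1)) 0

/-- the index sequence `i_a = a-1` for `1 ≤ a ≤ n+1`, `i_a = 2n+1-a` for
`n+2 ≤ a ≤ 2n` -/
def idx (n a : ℕ) : ℕ := if a ≤ n + 1 then a - 1 else 2 * n + 1 - a

/-- the ground-state element `(0,…,0)` -/
def bzero : D2Elt := ⟨fun _ => 0, 0, fun _ => 0⟩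

/-- element with `l` in coordinate `x_p`, zeros elsewhere -/
def unitX (l p : ℕ) : D2Elt := ⟨fun i => if i = p then (l : ℤ) else 0, 0, fun _ => 0⟩

/-- element with `l` in coordinate `x̄_p`, zeros elsewhere -/
def unitXb (l p : ℕ) : D2Elt := ⟨fun _ => 0, 0, fun i => if i = p then (l : ℤ) else 0⟩

/-- the extremal elements `b_0 = (0,…,0)`, `b_a = f_{i_a}^{φ_{i_a}(b_{a-1})} b_{a-1}` -/
def bseq (n l : ℕ) : ℕ → D2Elt
  | 0 => bzero
  | a + 1 => (f n (idx n (a+1)))^[(phi n l (idx n (a+1)) (bseq n l a)).toNat] (bseq n l a)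

theorem ext' {a b : D2Elt} (h1 : ∀ j, a.x j = b.x j) (h2 : a.x0 = b.x0)
    (h3 : ∀ j, a.xb j = b.xb j) : a = b := by
  cases a; cases b; simp only [mk.injEq]
  exact ⟨funext h1, h2, funext h3⟩

def X1 (k : ℤ) : D2Elt := ⟨fun j => if j = 1 then k else 0, 0, fun _ => 0⟩
def S (a : ℕ) (s t : ℤ) : D2Elt :=
  ⟨fun j => if j = a then s else if j = a + 1 then t else 0, 0, fun _ => 0⟩
def T (n : ℕ) (s e t : ℤ) : D2Elt :=
  ⟨fun j => if j = n then s else 0, e, fun j => if j = n then t else 0⟩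
def Sb (a : ℕ) (s t : ℤ) : D2Elt :=
  ⟨fun _ => 0, 0, fun j => if j = a then s else if j = a + 1 then t else 0⟩
def Xb1 (k : ℤ) : D2Elt := ⟨fun _ => 0, 0, fun j => if j = 1 then k else 0⟩

theorem f0_X1 (n : ℕ) (k : ℤ) (hk : 0 ≤ k) : f n 0 (X1 k) = X1 (k + 1) := by
  apply ext' <;> simp [f, f0, X1, hk, Function.update] <;> intro j <;> split_ifs <;> rfl

theorem iter_f0_X1 (n m : ℕ) (k : ℤ) (hk : 0 ≤ k) :
    (f n 0)^[m] (X1 k) = X1 (k + m) := by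
  induction m generalizing k with
  | zero => simp
  | succ m ih =>
    rw [Function.iterate_succ_apply, f0_X1 n k hk, ih (k+1) (by omega)]
    congr 1; push_cast; ring

theorem fmid_S (n a : ℕ) (h1 : 1 ≤ a) (h2 : a < n) (s t : ℤ) (ht : 0 ≤ t) :
    f n a (S a s t) = S a (s - 1) (t + 1) := by
  have : a ≠ 0 := by omega
  have : a ≠ n := by omega
  apply ext' <;>
    simp_all [f, fmid, S, ht, Function.update] <;> intro j <;> split_ifs <;> first | rfl | omega

theorem iter_fmid_S (n a : ℕ) (h1 : 1 ≤ a) (h2 : a < n) (m : ℕ) (s t : ℤ) (ht : 0 ≤ t) :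
    (f n a)^[m] (S a s t) = S a (s - m) (t + m) := by
  induction m generalizing s t with
  | zero => simp
  | succ m ih =>
    rw [Function.iterate_succ_apply, fmid_S n a h1 h2 s t ht, ih (s-1) (t+1) (by omega)]
    congr 1 <;> push_cast <;> ring

theorem flast2_T (n : ℕ) (hn : n ≠ 0) (s t : ℤ) :
    (f n n)^[2] (T n s 0 t) = T n (s - 1) 0 (t + 1) := by
  have e1 : f n n (T n s 0 t) = T n (s - 1) 1 t := by
    apply ext' <;> simp [f, flast, T, hn, Function.update] <;> intro j <;> split_ifs <;> rfl
  have e2 : f n n (T n (s-1) 1 t) = T n (s - 1) 0 (t + 1) := by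
    apply ext' <;> simp [f, flast, T, hn, Function.update] <;> intro j <;> split_ifs <;> rfl
  simp [Function.iterate_succ_apply, e1, e2]

theorem iter_flast_T (n : ℕ) (hn : n ≠ 0) (m : ℕ) (s : ℤ) :
    (f n n)^[2 * m] (T n s 0 0) = T n (s - m) 0 m := by
  induction m generalizing s with
  | zero => simp
  | succ m ih =>
    have : 2 * (m + 1) = 2 + 2 * m := by ring
    rw [this, Function.iterate_add_apply, ih s, flast2_T n hn (s - m) m]
    congr 1 <;> push_cast <;> ring

theorem fmid_Sb (n a : ℕ) (h1 : 1 ≤ a) (h2 : a < n) (s t : ℤ) (ht : 1 ≤ t) :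
    f n a (Sb a s t) = Sb a (s + 1) (t - 1) := by
  have h0 : a ≠ 0 := by omega
  have hn' : a ≠ n := by omega
  have hc : ¬ ((Sb a s t).xb (a+1) ≤ (Sb a s t).x (a+1)) := by simp [Sb]; omega
  have e : f n a (Sb a s t) = fmid a (Sb a s t) := by simp [f, h0, hn']
  rw [e]
  simp only [fmid, if_neg hc]
  apply ext' <;> simp [Sb, Function.update] <;> intro j <;> split_ifs <;> first | rfl | omega

theorem iter_fmid_Sb (n a : ℕ) (h1 : 1 ≤ a) (h2 : a < n) (m l : ℕ) (hm : m ≤ l) :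
    (f n a)^[m] (Sb a (l - m : ℤ) (m : ℤ)) = Sb a l 0 := by
  induction m with
  | zero => simp
  | succ m ih =>
    rw [Function.iterate_succ_apply, fmid_Sb n a h1 h2 _ _ (by push_cast; omega)]
    have e1 : ((l:ℤ) - (m+1 : ℕ)) + 1 = (l:ℤ) - m := by push_cast; ring
    have e2 : ((m+1 : ℕ) : ℤ) - 1 = (m : ℤ) := by push_cast; ring
    rw [e1, e2, ih (by omega)]

theorem f0_Xb1 (n : ℕ) (k : ℤ) (hk : 1 ≤ k) : f n 0 (Xb1 k) = Xb1 (k - 1) := by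
  have hc : ¬ (k ≤ 0) := by omega
  apply ext' <;> simp [f, f0, Xb1, hc, Function.update] <;> intro j <;> split_ifs <;> rfl

theorem iter_f0_Xb1 (n m l : ℕ) (hm : m ≤ l) :
    (f n 0)^[m] (Xb1 (l : ℤ)) = Xb1 ((l : ℤ) - m) := by
  induction m with
  | zero => simp
  | succ m ih =>
    rw [Function.iterate_succ_apply', ih (by omega), f0_Xb1 n _ (by push_cast; omega)]
    push_cast; ring_nf


theorem bzero_eq : bzero = X1 0 := by
  refine ext' (fun j => ?_) rfl (fun j => ?_) <;> simp [bzero, X1] <;> split_ifs <;> rfl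

theorem X1_eq (l : ℕ) : X1 (l : ℤ) = unitX l 1 := by
  refine ext' (fun j => ?_) rfl (fun j => ?_) <;> simp [unitX, X1]

theorem unitX_eq_S (l a : ℕ) : unitX l a = S a (l : ℤ) 0 := by
  refine ext' (fun j => ?_) rfl (fun j => ?_) <;> simp [unitX, S] <;> split_ifs <;> first | rfl | omega

theorem S_eq_unitX (l a : ℕ) : S a 0 (l : ℤ) = unitX l (a + 1) := by
  refine ext' (fun j => ?_) rfl (fun j => ?_) <;> simp [unitX, S] <;> intro h1 h2 <;> omega

theorem unitX_eq_T (l n : ℕ) : unitX l n = T n (l : ℤ) 0 0 := by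
  refine ext' (fun j => ?_) rfl (fun j => ?_) <;> simp [unitX, T] <;> split_ifs <;> rfl

theorem T_eq_unitXb (l n : ℕ) : T n 0 0 (l : ℤ) = unitXb l n := by
  refine ext' (fun j => ?_) rfl (fun j => ?_) <;> simp [unitXb, T] <;> split_ifs <;> rfl

theorem unitXb_eq_Sb (l a : ℕ) : unitXb l (a + 1) = Sb a 0 (l : ℤ) := by
  refine ext' (fun j => ?_) rfl (fun j => ?_) <;> simp [unitXb, Sb] <;> intro h1 h2 <;> omega

theorem Sb_eq_unitXb (l a : ℕ) : Sb a (l : ℤ) 0 = unitXb l a := by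
  refine ext' (fun j => ?_) rfl (fun j => ?_) <;> simp [unitXb, Sb] <;> split_ifs <;> first | rfl | omega

theorem unitXb_eq_Xb1 (l : ℕ) : unitXb l 1 = Xb1 (l : ℤ) := by
  refine ext' (fun j => ?_) rfl (fun j => ?_) <;> simp [unitXb, Xb1]

theorem Xb1_zero : Xb1 0 = bzero := by
  refine ext' (fun j => ?_) rfl (fun j => ?_) <;> simp [bzero, Xb1] <;> split_ifs <;> rfl

theorem phi_zero_bzero (n l : ℕ) : (phi n l 0 bzero).toNat = l := by
  simp [phi, bzero, sumD]

theorem phi_mid_unitX (n l a : ℕ) (h1 : 1 ≤ a) (h2 : a < n) :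
    (phi n l a (unitX l a)).toNat = l := by
  have h0 : a ≠ 0 := by omega
  have hn' : a ≠ n := by omega
  simp [phi, unitX, h0, hn']

theorem phi_last_unitX (n l : ℕ) (hn : n ≠ 0) :
    (phi n l n (unitX l n)).toNat = 2 * l := by
  have : phi n l n (unitX l n) = ((2 * l : ℕ) : ℤ) := by
    simp [phi, unitX, hn]
  rw [this, Int.toNat_natCast]

theorem phi_mid_unitXb (n l a : ℕ) (h1 : 1 ≤ a) (h2 : a < n) :
    (phi n l a (unitXb l (a + 1))).toNat = l := by
  have h0 : a ≠ 0 := by omega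
  have hn' : a ≠ n := by omega
  have ha : a + 1 ≠ a := by omega
  simp [phi, unitXb, h0, hn', ha]

theorem bseq_X (n l : ℕ) (hn : 2 ≤ n) :
    ∀ a, 1 ≤ a → a ≤ n → bseq n l a = unitX l a := by
  intro a
  induction a with
  | zero => omega
  | succ a ih =>
    intro _ h
    rcases Nat.eq_zero_or_pos a with h0 | h1
    · subst h0
      have hidx : idx n 1 = 0 := by simp [idx]
      simp only [bseq, hidx, phi_zero_bzero]
      rw [bzero_eq, iter_f0_X1 n l 0 le_rfl, zero_add, X1_eq]
    · have ha : a < n := by omega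
      have hidx : idx n (a + 1) = a := by simp [idx]; omega
      simp only [bseq, hidx, ih h1 (by omega), phi_mid_unitX n l a h1 ha]
      rw [unitX_eq_S, iter_fmid_S n a h1 ha l (l : ℤ) 0 le_rfl]
      rw [show ((l : ℤ) - l) = 0 by ring, show ((0 : ℤ) + l) = (l : ℤ) by ring,
        S_eq_unitX]

theorem bseq_Xb (n l : ℕ) (hn : 2 ≤ n) :
    ∀ a, 1 ≤ a → a ≤ n → bseq n l (n + a) = unitXb l (n - a + 1) := by
  intro a
  induction a with
  | zero => omega
  | succ a ih =>
    intro _ h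
    rcases Nat.eq_zero_or_pos a with h0 | h1
    · subst h0
      have hidx : idx n (n + 1) = n := by simp [idx]
      have hn0 : n ≠ 0 := by omega
      simp only [bseq, hidx, bseq_X n l hn n (by omega) le_rfl, phi_last_unitX n l hn0]
      rw [unitX_eq_T, iter_flast_T n hn0 l (l : ℤ),
        show ((l : ℤ) - l) = 0 by ring, T_eq_unitXb,
        show n - 1 + 1 = n by omega]
    · set i := n - a with hi
      have h1i : 1 ≤ i := by omega
      have h2i : i < n := by omega
      have hidx : idx n (n + a + 1) = i := by
        have hne : ¬ (n + a + 1 ≤ n + 1) := by omega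
        simp only [idx, if_neg hne]; omega
      have hprev : bseq n l (n + a) = unitXb l (i + 1) := by
        rw [ih h1 (by omega)]; all_goals (congr 1; omega)
      have hstep : n + (a + 1) = (n + a) + 1 := by omega
      rw [hstep]
      simp only [bseq, hidx, hprev, phi_mid_unitXb n l i h1i h2i]
      rw [unitXb_eq_Sb, show (0 : ℤ) = (l : ℤ) - l by ring,
        iter_fmid_Sb n i h1i h2i l l le_rfl, Sb_eq_unitXb]
      congr 1; omega

end D2Elt

/-- in the `D_{n+1}^{(2)}` perfect crystal of level `l`, the
extremal elements satisfy: `b_a` has `l` in coordinate `x_a`, zeros elsewhere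
(`1 ≤ a ≤ n`); `b_{n+a}` has `l` in coordinate `x̄_{n-a+1}`, zeros elsewhere
(`1 ≤ a ≤ n`); and `b_0 = f_0^l b_{2n}` (with `⟨lΛ_0, h_0⟩ = l`). -/
theorem D2np1_extremal_elements (n l : ℕ) (hn : 2 ≤ n) (hl : 1 ≤ l) :
    (∀ a, 1 ≤ a → a ≤ n → D2Elt.bseq n l a = D2Elt.unitX l a) ∧
    (∀ a, 1 ≤ a → a ≤ n → D2Elt.bseq n l (n + a) = D2Elt.unitXb l (n - a + 1)) ∧
    (D2Elt.f n 0)^[l] (D2Elt.bseq n l (2*n)) = D2Elt.bseq n l 0 := by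
  refine ⟨D2Elt.bseq_X n l hn, D2Elt.bseq_Xb n l hn, ?_⟩
  have h2n : D2Elt.bseq n l (2 * n) = D2Elt.unitXb l 1 := by
    rw [show 2 * n = n + n by ring, D2Elt.bseq_Xb n l hn n (by omega) le_rfl]
    congr 1; omega
  rw [h2n, D2Elt.unitXb_eq_Xb1, D2Elt.iter_f0_Xb1 n l l le_rfl,
    show ((l : ℤ) - l) = 0 by ring, D2Elt.Xb1_zero]
  rfl
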